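/- Let m and n be natural numbers with m ≠ n, and let G be a simple graph on m+n vertices having exactly m vertices of degree n and exactly n vertices of degree m, such that G is not isomorphic to the complete bipartite graph K_{m,n}. Then G is 2-connected: G is connected, has at least 3 vertices, and the graph obtained by deleting any single vertex of G is connected. -/

import Mathlib

open SimpleGraph

/-- The degree multiset of a finite simple graph. -/
def degreeMultiset {V : Type} [Fintype V] (G : SimpleGraph V) [DecidableRel G.Adj] :
    Multiset ℕ :=
  Finset.univ.val.map fun v => G.degree v

/-- Swapping the two sides of a complete bipartite graph. -/
def cbSwap (α β : Type) : completeBipartiteGraph α β ≃g completeBipartiteGraph β α where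
  toEquiv := Equiv.sumComm α β
  map_rel_iff' := by
    intro x y
    cases x <;> cases y <;> simp [completeBipartiteGraph]

theorem stmt5_main (m n : ℕ) (hlt : m < n) {V : Type} [Fintype V] (G : SimpleGraph V)
    [DecidableRel G.Adj]
    (hcard : Fintype.card V = m + n)
    (hdeg : degreeMultiset G = Multiset.replicate m n + Multiset.replicate n m)
    (hnotiso : IsEmpty (G ≃g completeBipartiteGraph (Fin m) (Fin n))) :
    G.Connected ∧ 3 ≤ Fintype.card V ∧
      ∀ v : V, (G.induce ({v}ᶜ : Set V)).Connected := by
  classical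
  -- every degree is m or n
  have hmem : ∀ v : V, G.degree v = n ∨ G.degree v = m := by
    intro v
    have hv : G.degree v ∈ degreeMultiset G :=
      Multiset.mem_map_of_mem _ (Finset.mem_univ v)
    rw [hdeg, Multiset.mem_add, Multiset.mem_replicate, Multiset.mem_replicate] at hv
    tauto
  -- the number of vertices of degree n is m
  have hcount : (Finset.univ.filter (fun v => G.degree v = n)).card = m := by
    have h1 : Multiset.count n (degreeMultiset G) = m := by
      rw [hdeg, Multiset.count_add, Multiset.count_replicate, Multiset.count_replicate,
        if_neg hlt.ne]
      simp
    rw [degreeMultiset, Multiset.count_map] at h1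
    rw [← h1, Finset.card, Finset.filter_val]
    congr 1
    exact Multiset.filter_congr (fun x _ => eq_comm)
  -- m = 0 is impossible
  have hm0 : m ≠ 0 := by
    intro hm
    subst hm
    have hG : ∀ u w : V, ¬ G.Adj u w := by
      intro u w huw
      have : 0 < G.degree u := (G.degree_pos_iff_exists_adj u).mpr ⟨w, huw⟩
      rcases hmem u with h | h
      · have : u ∈ Finset.univ.filter (fun v => G.degree v = n) := by simp [h]
        rw [Finset.card_eq_zero.mp hcount] at this
        simp at this
      · omega
    have e : V ≃ (Fin 0 ⊕ Fin n) := Fintype.equivOfCardEq (by simp [hcard])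
    refine hnotiso.false ⟨e, ?_⟩
    intro u v
    obtain ⟨x, hx⟩ : ∃ x, e u = Sum.inr x := by
      rcases h : e u with x | x
      · exact x.elim0
      · exact ⟨x, rfl⟩
    obtain ⟨y, hy⟩ : ∃ y, e v = Sum.inr y := by
      rcases h : e v with y | y
      · exact y.elim0
      · exact ⟨y, rfl⟩
    simp [hx, hy, hG u v]
  -- m = 1 is impossible
  have hm1 : m ≠ 1 := by
    intro hm
    subst hm
    obtain ⟨a, ha⟩ := Finset.card_eq_one.mp hcount
    have hadeg : G.degree a = n := by
      have : a ∈ Finset.univ.filter (fun v => G.degree v = n) := by rw [ha]; simp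
      simpa using this
    have honly : ∀ v : V, v ≠ a → G.degree v = 1 := by
      intro v hv
      rcases hmem v with h | h
      · exfalso
        have : v ∈ Finset.univ.filter (fun w => G.degree w = n) := by simp [h]
        rw [ha] at this
        simp at this
        exact hv this
      · exact h
    -- a is adjacent to everything else
    have hNa : G.neighborFinset a = Finset.univ.erase a := by
      apply Finset.eq_of_subset_of_card_le
      · intro w hw
        rw [mem_neighborFinset] at hw
        exact Finset.mem_erase.mpr ⟨hw.ne', Finset.mem_univ w⟩
      · rw [Finset.card_erase_of_mem (Finset.mem_univ a), Finset.card_univ, hcard]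
        rw [← degree, hadeg]
        omega
    have hAdja : ∀ w : V, G.Adj a w ↔ w ≠ a := by
      intro w
      rw [← mem_neighborFinset, hNa, Finset.mem_erase]
      simp
    -- each other vertex is adjacent only to a
    have hNv : ∀ v : V, v ≠ a → G.neighborFinset v = {a} := by
      intro v hv
      symm
      apply Finset.eq_of_subset_of_card_le
      · intro w hw
        rw [Finset.mem_singleton] at hw
        subst hw
        rw [mem_neighborFinset]
        exact ((hAdja v).mpr hv).symm
      · have h1 : (G.neighborFinset v).card = 1 := honly v hv
        simp [h1]
    have hAdj : ∀ u v : V, G.Adj u v ↔ ((u = a ∧ v ≠ a) ∨ (u ≠ a ∧ v = a)) := by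
      intro u v
      constructor
      · intro h
        rcases eq_or_ne u a with hu | hu
        · subst hu
          exact Or.inl ⟨rfl, h.ne'⟩
        · refine Or.inr ⟨hu, ?_⟩
          have hv : v ∈ G.neighborFinset u := by rw [mem_neighborFinset]; exact h
          rw [hNv u hu] at hv
          exact Finset.mem_singleton.mp hv
      · rintro (⟨hu, hv⟩ | ⟨hu, hv⟩)
        · subst hu; exact (hAdja v).mpr hv
        · subst hv; exact ((hAdja u).mpr hu).symm
    have hcs : Fintype.card {v : V // ¬ v = a} = n := by
      have h1 := Fintype.card_subtype_compl (fun v : V => v = a)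
      rw [Fintype.card_subtype_eq a, hcard] at h1
      omega
    let e1 : {v : V // v = a} ≃ Fin 1 := Fintype.equivFinOfCardEq (Fintype.card_subtype_eq a)
    let e2 : {v : V // ¬ v = a} ≃ Fin n := Fintype.equivFinOfCardEq hcs
    let e : V ≃ (Fin 1 ⊕ Fin n) :=
      (Equiv.sumCompl (fun v => v = a)).symm.trans (Equiv.sumCongr e1 e2)
    have he : ∀ u : V,
        (∀ h : u = a, e u = Sum.inl (e1 ⟨u, h⟩)) ∧
        (∀ h : ¬ u = a, e u = Sum.inr (e2 ⟨u, h⟩)) := by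
      intro u
      constructor
      · intro h
        show Equiv.sumCongr e1 e2 ((Equiv.sumCompl (fun v => v = a)).symm u) = _
        rw [Equiv.sumCompl_symm_apply_of_pos (p := fun v => v = a) h]
        rfl
      · intro h
        show Equiv.sumCongr e1 e2 ((Equiv.sumCompl (fun v => v = a)).symm u) = _
        rw [Equiv.sumCompl_symm_apply_of_neg (p := fun v => v = a) h]
        rfl
    refine hnotiso.false ⟨e, ?_⟩
    intro u v
    rw [hAdj u v]
    by_cases hu : u = a <;> by_cases hv : v = a
    · rw [(he u).1 hu, (he v).1 hv]; simp [hu, hv]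
    · rw [(he u).1 hu, (he v).2 hv]; simp [hu, hv]
    · rw [(he u).2 hu, (he v).1 hv]; simp [hu, hv]
    · rw [(he u).2 hu, (he v).2 hv]; simp [hu, hv]
  -- now the main case : m ≥ 2
  have h2 : 2 ≤ m := by omega
  have hcard3 : 3 ≤ Fintype.card V := by omega
  have hmge : ∀ u : V, m ≤ G.degree u := by
    intro u
    rcases hmem u with h | h <;> omega
  -- deletion of any vertex keeps the graph connected
  have hdel : ∀ v : V, (G.induce ({v}ᶜ : Set V)).Connected := by
    intro v0
    obtain ⟨w0, hw0⟩ : ∃ w : V, w ≠ v0 := by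
      have : 1 < Fintype.card V := by omega
      exact Fintype.exists_ne_of_one_lt_card this v0
    have hne : Nonempty ({v0}ᶜ : Set V) := ⟨⟨w0, by simp [hw0]⟩⟩
    rw [connected_iff]
    refine ⟨?_, hne⟩
    by_contra hpre
    rw [Preconnected] at hpre
    push_neg at hpre
    obtain ⟨a, b, hnab⟩ := hpre
    let s : Set V := ({v0}ᶜ : Set V)
    let P : V → Prop := fun w => ∃ hw : w ∈ s, (G.induce s).Reachable a ⟨w, hw⟩
    let R : Finset V := Finset.univ.filter P
    let Q : Finset V := (Finset.univ.filter (· ≠ v0)) \ R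
    have hmemR : ∀ w, w ∈ R ↔ P w := by intro w; simp [R]
    have hsub : ∀ w, w ∈ s ↔ w ≠ v0 := by intro w; simp [s]
    have haR : (a : V) ∈ R := (hmemR a).mpr ⟨a.2, by rw [Subtype.coe_eta]⟩
    have hbQ : (b : V) ∈ Q := by
      refine Finset.mem_sdiff.mpr ⟨by simp [(hsub b).mp b.2], ?_⟩
      intro hb
      obtain ⟨hw, hr⟩ := (hmemR _).mp hb
      exact hnab (by rwa [Subtype.coe_eta] at hr)
    have hRs : R ⊆ Finset.univ.filter (· ≠ v0) := by
      intro w hw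
      obtain ⟨hws, _⟩ := (hmemR w).mp hw
      simp [(hsub w).mp hws]
    have hcards : (Finset.univ.filter (· ≠ v0)).card = m + n - 1 := by
      rw [Finset.filter_ne' Finset.univ v0,
        Finset.card_erase_of_mem (Finset.mem_univ v0), Finset.card_univ, hcard]
    have hRQ : R.card + Q.card = m + n - 1 := by
      have h1 : Q.card = (Finset.univ.filter (· ≠ v0)).card - R.card :=
        Finset.card_sdiff_of_subset hRs
      have h2 : R.card ≤ (Finset.univ.filter (· ≠ v0)).card := Finset.card_le_card hRs
      omega
    -- degree bound inside R
    have hdegR : ∀ u, u ∈ R → G.degree u ≤ R.card := by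
      intro u hu
      obtain ⟨hus, hur⟩ := (hmemR u).mp hu
      have hsubN : G.neighborFinset u ⊆ (R ∪ {v0}).erase u := by
        intro w hw
        rw [mem_neighborFinset] at hw
        refine Finset.mem_erase.mpr ⟨hw.ne', ?_⟩
        rcases eq_or_ne w v0 with h | h
        · simp [h]
        · have hws : w ∈ s := (hsub w).mpr h
          refine Finset.mem_union_left _ ((hmemR w).mpr ⟨hws, ?_⟩)
          exact hur.trans (Adj.reachable (by simpa using hw))
      calc G.degree u = (G.neighborFinset u).card := rfl
        _ ≤ ((R ∪ {v0}).erase u).card := Finset.card_le_card hsubN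
        _ = (R ∪ {v0}).card - 1 :=
            Finset.card_erase_of_mem (Finset.mem_union_left _ hu)
        _ ≤ R.card + 1 - 1 := by
            have := Finset.card_union_le R ({v0} : Finset V)
            simp only [Finset.card_singleton] at this
            omega
        _ = R.card := by omega
    -- degree bound inside Q
    have hdegQ : ∀ u, u ∈ Q → G.degree u ≤ Q.card := by
      intro u hu
      obtain ⟨hu1, hu2⟩ := Finset.mem_sdiff.mp hu
      have hune : u ≠ v0 := by simpa using hu1
      have hus : u ∈ s := (hsub u).mpr hune
      have hsubN : G.neighborFinset u ⊆ (Q ∪ {v0}).erase u := by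
        intro w hw
        rw [mem_neighborFinset] at hw
        refine Finset.mem_erase.mpr ⟨hw.ne', ?_⟩
        rcases eq_or_ne w v0 with h | h
        · simp [h]
        · have hws : w ∈ s := (hsub w).mpr h
          refine Finset.mem_union_left _ (Finset.mem_sdiff.mpr ⟨by simp [h], ?_⟩)
          intro hwR
          obtain ⟨hws', hwr⟩ := (hmemR w).mp hwR
          exact hu2 ((hmemR u).mpr ⟨hus, hwr.trans (Adj.reachable (by simpa using hw.symm))⟩)
      calc G.degree u = (G.neighborFinset u).card := rfl
        _ ≤ ((Q ∪ {v0}).erase u).card := Finset.card_le_card hsubN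
        _ = (Q ∪ {v0}).card - 1 :=
            Finset.card_erase_of_mem (Finset.mem_union_left _ hu)
        _ ≤ Q.card + 1 - 1 := by
            have := Finset.card_union_le Q ({v0} : Finset V)
            simp only [Finset.card_singleton] at this
            omega
        _ = Q.card := by omega
    -- a vertex of degree n different from v0
    obtain ⟨x, hxv0, hxdeg⟩ : ∃ x : V, x ≠ v0 ∧ G.degree x = n := by
      have h1 : 1 < (Finset.univ.filter (fun v => G.degree v = n)).card := by omega
      obtain ⟨x, hx, y, hy, hxy⟩ := Finset.one_lt_card.mp h1
      simp only [Finset.mem_filter] at hx hy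
      rcases eq_or_ne x v0 with h | h
      · exact ⟨y, by rw [← h]; exact fun hc => hxy hc.symm, hy.2⟩
      · exact ⟨x, h, hx.2⟩
    have haRc : m ≤ R.card := le_trans (hmge a) (hdegR _ haR)
    have hbQc : m ≤ Q.card := le_trans (hmge b) (hdegQ _ hbQ)
    rcases Finset.mem_sdiff.mp hbQ with _
    have hx : x ∈ R ∨ x ∈ Q := by
      by_cases hxR : x ∈ R
      · exact Or.inl hxR
      · exact Or.inr (Finset.mem_sdiff.mpr ⟨by simp [hxv0], hxR⟩)
    rcases hx with hxR | hxQ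
    · have : n ≤ R.card := hxdeg ▸ hdegR _ hxR
      omega
    · have : n ≤ Q.card := hxdeg ▸ hdegQ _ hxQ
      omega
  -- connectivity of G itself
  have hnV : Nonempty V := Fintype.card_pos_iff.mp (by omega)
  obtain ⟨v0⟩ := hnV
  have hconn : G.Connected := by
    rw [connected_iff]
    refine ⟨?_, ⟨v0⟩⟩
    have hlift : ∀ w z : V, w ≠ v0 → z ≠ v0 → G.Reachable w z := by
      intro w z hw hz
      have hr := (hdel v0).preconnected ⟨w, by simp [hw]⟩ ⟨z, by simp [hz]⟩
      exact hr.map (SimpleGraph.Embedding.induce _).toHom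
    obtain ⟨u, hu⟩ : ∃ u, G.Adj v0 u := by
      apply (G.degree_pos_iff_exists_adj v0).mp
      have := hmge v0
      omega
    have h0 : ∀ z : V, G.Reachable v0 z := by
      intro z
      rcases eq_or_ne z v0 with h | h
      · rw [h]
      · exact (hu.reachable).trans (hlift u z hu.ne' h)
    intro x y
    exact (h0 x).symm.trans (h0 y)
  exact ⟨hconn, hcard3, hdel⟩

theorem stmt_5 (m n : ℕ) (hmn : m ≠ n) {V : Type} [Fintype V] (G : SimpleGraph V)
    [DecidableRel G.Adj]
    (hcard : Fintype.card V = m + n)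
    (hdeg : degreeMultiset G = Multiset.replicate m n + Multiset.replicate n m)
    (hnotiso : IsEmpty (G ≃g completeBipartiteGraph (Fin m) (Fin n))) :
    G.Connected ∧ 3 ≤ Fintype.card V ∧
      ∀ v : V, (G.induce ({v}ᶜ : Set V)).Connected := by
  rcases lt_or_gt_of_ne hmn with h | h
  · exact stmt5_main m n h G hcard hdeg hnotiso
  · exact stmt5_main n m h G (by omega) (by rw [hdeg, add_comm])
      ⟨fun i => hnotiso.false (i.trans (cbSwap (Fin n) (Fin m)))⟩
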